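/- Let C be a partition of the player set N of a finite normal-form game with identical interests that is permutation-invariant. Then for every p ∈ Δ^n, the average of the utilities at the profiles (p_i, p̄_{-i}) equals the utility at the centroid: (1/n) ∑_{i=1}^n U(p_i, p̄_{-i}) = U(p̄). -/
import Mathlib


open MeasureTheory Filter Topology

noncomputable section

namespace ECFP

variable {ι A κ : Type*}

/-- The mixed-strategy simplex over a finite action set `Y` inside the action universe `A`. -/
def simplex (Y : Finset A) : Set (A → ℝ) :=
  {p | (∀ a, 0 ≤ p a) ∧ (∀ a, a ∉ Y → p a = 0) ∧ ∑ a ∈ Y, p a = 1}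

/-- The space `Δⁿ` of joint mixed strategies. -/
def Delta (Y : ι → Finset A) : Set (ι → A → ℝ) :=
  {p | ∀ i, p i ∈ simplex (Y i)}

variable [Fintype ι] [DecidableEq ι] [Fintype A] [DecidableEq κ]

/-- The mixed extension of the common utility `u`:
`U(p₁,…,pₙ) = ∑_y u(y) p₁(y₁)⋯pₙ(yₙ)`. -/
def U (u : (ι → A) → ℝ) (p : ι → A → ℝ) : ℝ :=
  ∑ y : ι → A, u y * ∏ i, p i (y i)

/-- The `ε`-best-response set of player `i` against the joint strategy `p`
(only the components `p_{-i}` matter, since player `i`'s component is overwritten):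
`{pᵢ ∈ Δᵢ : U(pᵢ,p_{-i}) ≥ U(qᵢ,p_{-i}) - ε  ∀ qᵢ ∈ Δᵢ}`. -/
def BRi (Y : ι → Finset A) (u : (ι → A) → ℝ) (ε : ℝ) (p : ι → A → ℝ) (i : ι) :
    Set (A → ℝ) :=
  {pi | pi ∈ simplex (Y i) ∧
    ∀ qi ∈ simplex (Y i),
      U u (Function.update p i pi) ≥ U u (Function.update p i qi) - ε}

/-- The joint `ε`-best-response set `BR^ε(p) = (BR₁^ε(p_{-1}),…,BRₙ^ε(p_{-n}))`. -/
def BR (Y : ι → Finset A) (u : (ι → A) → ℝ) (ε : ℝ) (p : ι → A → ℝ) :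
    Set (ι → A → ℝ) :=
  {b | ∀ i, b i ∈ BRi Y u ε p i}

/-- The profile obtained from `y` by swapping the strategies of players `i` and `j`. -/
def swapStrat (y : ι → A) (i j : ι) : ι → A :=
  Function.update (Function.update y i (y j)) j (y i)

/-- `cls : ι → κ` encodes a permutation-invariant partition of the player set (the classes
are the fibers of `cls`): players in the same class have the same action set, and the utility
is invariant under swapping the strategies of two same-class players in any strategy profile. -/
def PermInvariant (Y : ι → Finset A) (u : (ι → A) → ℝ) (cls : ι → κ) : Prop :=
  ∀ i j : ι, cls i = cls j →
    Y i = Y j ∧ ∀ y : ι → A, (∀ k, y k ∈ Y k) → u (swapStrat y i j) = u y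

/-- The equivalence class (as a finset of players) of player `i`. -/
def cluster (cls : ι → κ) (i : ι) : Finset ι :=
  Finset.univ.filter (fun j => cls j = cls i)

/-- The centroid distribution `p̄`: player `i` is assigned the average of the strategies of
the players in `i`'s class. -/
def centroid (cls : ι → κ) (p : ι → A → ℝ) : ι → A → ℝ :=
  fun i => ((cluster cls i).card : ℝ)⁻¹ • ∑ j ∈ cluster cls i, p j

/-- A joint strategy is class-constant if same-class players use identical strategies. -/
def classConst (cls : ι → κ) (p : ι → A → ℝ) : Prop :=
  ∀ i j, cls i = cls j → p i = p j

/-- The set of Nash equilibria. -/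
def NE (Y : ι → Finset A) (u : (ι → A) → ℝ) : Set (ι → A → ℝ) :=
  {p | p ∈ Delta Y ∧ ∀ i, ∀ qi ∈ simplex (Y i),
    U u (Function.update p i qi) ≤ U u p}

/-- The set of symmetric Nash equilibria relative to the partition `cls`. -/
def SNE (Y : ι → Finset A) (u : (ι → A) → ℝ) (cls : ι → κ) : Set (ι → A → ℝ) :=
  {p | p ∈ NE Y u ∧ classConst cls p}

/-- The set of mean-centric equilibria relative to the partition `cls`:
`U(pᵢ, p̄_{-i}) ≥ U(pᵢ', p̄_{-i})` for all `pᵢ' ∈ Δᵢ` and all `i`. -/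
def MCE (Y : ι → Finset A) (u : (ι → A) → ℝ) (cls : ι → κ) : Set (ι → A → ℝ) :=
  {p | p ∈ Delta Y ∧ ∀ i, ∀ qi ∈ simplex (Y i),
    U u (Function.update (centroid cls p) i qi)
      ≤ U u (Function.update (centroid cls p) i (p i))}

/-- `V(p) = (1/n) ∑ᵢ U(pᵢ, p̄_{-i})`. -/
def Vfun (u : (ι → A) → ℝ) (cls : ι → κ) (p : ι → A → ℝ) : ℝ :=
  (Fintype.card ι : ℝ)⁻¹ * ∑ i, U u (Function.update (centroid cls p) i (p i))

/-- A discrete-time ECFP process w.r.t. `(Γ, 𝒞)`: `q(1) = a(1)`,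
`q(t+1) = q(t) + γₜ (a(t+1) − q(t))` and `a(t+1) ∈ BR^{εₜ}(q̄(t))` for all `t`
(time is indexed by `ℕ`, i.e. `t = 0` plays the role of `t = 1` in the paper). -/
structure IsECFP (Y : ι → Finset A) (u : (ι → A) → ℝ) (cls : ι → κ)
    (γ ε : ℕ → ℝ) (a q : ℕ → ι → A → ℝ) : Prop where
  a_init_mem : a 0 ∈ Delta Y
  q_mem : ∀ t, q t ∈ Delta Y
  init : q 0 = a 0
  step : ∀ t, q (t + 1) = q t + γ t • (a (t + 1) - q t)
  br : ∀ t, a (t + 1) ∈ BR Y u (ε t) (centroid cls (q t))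

/-- A solution of the differential inclusion `ẋ ∈ F(x)` taking values in `Δⁿ`:
an everywhere-`Δⁿ`-valued trajectory on `[0,∞)` which is the integral of a locally
integrable selection `g(t) ∈ F(x(t))` (a.e.). -/
def IsSolution (Y : ι → Finset A) (F : (ι → A → ℝ) → Set (ι → A → ℝ))
    (x : ℝ → ι → A → ℝ) : Prop :=
  (∀ t : ℝ, 0 ≤ t → x t ∈ Delta Y) ∧
  ∃ g : ℝ → ι → A → ℝ,
    LocallyIntegrableOn g (Set.Ici (0 : ℝ)) ∧
    (∀ᵐ t ∂(volume.restrict (Set.Ici (0 : ℝ))), g t ∈ F (x t)) ∧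
    ∀ t : ℝ, 0 ≤ t → x t = x 0 + ∫ s in Set.Ioc (0 : ℝ) t, g s

/-- Right-hand side of the joint CT-ECFP differential inclusion `q̇ ∈ BR(q̄) − q`. -/
def Fjoint (Y : ι → Finset A) (u : (ι → A) → ℝ) (cls : ι → κ)
    (q : ι → A → ℝ) : Set (ι → A → ℝ) :=
  (fun b => b - q) '' BR Y u 0 (centroid cls q)

/-- Right-hand side of the centroid CT-ECFP differential inclusion `ẏ ∈ BR(y) − y`. -/
def Fcent (Y : ι → Finset A) (u : (ι → A) → ℝ)
    (y : ι → A → ℝ) : Set (ι → A → ℝ) :=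
  (fun b => b - y) '' BR Y u 0 y

/-- The ω-limit set of a continuous-time trajectory: all limits of sequences
`x(t_k)` with `t_k → ∞`. -/
def omegaLimitSet (x : ℝ → ι → A → ℝ) : Set (ι → A → ℝ) :=
  {p | ∃ tk : ℕ → ℝ, Tendsto tk atTop atTop ∧ Tendsto (fun k => x (tk k)) atTop (𝓝 p)}

/-- The set of limit points of a (discrete-time) sequence. -/
def seqLimitPoints (q : ℕ → ι → A → ℝ) : Set (ι → A → ℝ) :=
  {p | ∃ φ : ℕ → ℕ, StrictMono φ ∧ Tendsto (fun k => q (φ k)) atTop (𝓝 p)}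

/-- A compact set `X ⊆ Δⁿ` is internally chain transitive for the inclusion `ẋ ∈ F(x)`:
any two points of `X` can be joined, for every `ε > 0` and `T > 0`, by finitely many
solution pieces of duration `> T` staying in `X`, with jumps of size `≤ ε`. -/
def InternallyChainTransitive (Y : ι → Finset A)
    (F : (ι → A → ℝ) → Set (ι → A → ℝ)) (X : Set (ι → A → ℝ)) : Prop :=
  IsCompact X ∧ X ⊆ Delta Y ∧
  ∀ ξ ∈ X, ∀ η ∈ X, ∀ ε : ℝ, 0 < ε → ∀ T : ℝ, 0 < T →
    ∃ k : ℕ, 0 < k ∧ ∃ x : ℕ → ℝ → ι → A → ℝ, ∃ tt : ℕ → ℝ,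
      (∀ i < k, IsSolution Y F (x i)) ∧
      (∀ i < k, T < tt i) ∧
      (∀ i < k, ∀ s : ℝ, 0 ≤ s → s ≤ tt i → x i s ∈ X) ∧
      (∀ i, i + 1 < k → ‖x i (tt i) - x (i + 1) 0‖ ≤ ε) ∧
      ‖x 0 0 - ξ‖ ≤ ε ∧ ‖x (k - 1) (tt (k - 1)) - η‖ ≤ ε

variable [Nonempty ι]

/-- Expansion of `U` at an updated coordinate: linear form in the updated strategy. -/
lemma U_update_eq (u : (ι → A) → ℝ) (P : ι → A → ℝ) (i : ι) (q : A → ℝ) :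
    U u (Function.update P i q) =
      ∑ y : ι → A, (u y * ∏ k ∈ Finset.univ.erase i, P k (y k)) * q (y i) := by
  unfold U
  refine Finset.sum_congr rfl fun y _ => ?_
  rw [← Finset.mul_prod_erase Finset.univ _ (Finset.mem_univ i), Function.update_self]
  have h : ∏ k ∈ Finset.univ.erase i, Function.update P i q k (y k)
      = ∏ k ∈ Finset.univ.erase i, P k (y k) :=
    Finset.prod_congr rfl fun k hk => by
      rw [Function.update_of_ne (Finset.ne_of_mem_erase hk)]
  rw [h]; ring

/-- `U` applied with a scaled sum in one coordinate. -/
lemma U_update_smul_sum (u : (ι → A) → ℝ) (P : ι → A → ℝ) (i : ι) (c : ℝ)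
    (s : Finset ι) (f : ι → A → ℝ) :
    U u (Function.update P i (c • ∑ j ∈ s, f j))
      = c * ∑ j ∈ s, U u (Function.update P i (f j)) := by
  simp only [U_update_eq, Pi.smul_apply, Finset.sum_apply, smul_eq_mul,
    Finset.mul_sum]
  rw [Finset.sum_comm]
  refine Finset.sum_congr rfl fun j _ => Finset.sum_congr rfl fun y _ => by ring

/-- Swap invariance of the mixed extension. -/
lemma U_swapMixed (Y : ι → Finset A) (u : (ι → A) → ℝ) (i j : ι)
    (hu : ∀ y : ι → A, (∀ k, y k ∈ Y k) → u (swapStrat y i j) = u y)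
    (P : ι → A → ℝ) (hP : ∀ k, P k ∈ simplex (Y k)) :
    U u (Function.update (Function.update P i (P j)) j (P i)) = U u P := by
  classical
  set Q := Function.update (Function.update P i (P j)) j (P i) with hQdef
  have hQ : ∀ k, Q (Equiv.swap i j k) = P k := by
    intro k
    by_cases h1 : k = i
    · rw [h1, Equiv.swap_apply_left, hQdef, Function.update_self]
    · by_cases h2 : k = j
      · have hji : i ≠ j := fun hij => h1 (h2.trans hij.symm)
        rw [h2, Equiv.swap_apply_right, hQdef, Function.update_of_ne hji,
          Function.update_self]
      · rw [Equiv.swap_apply_of_ne_of_ne h1 h2, hQdef,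
          Function.update_of_ne h2, Function.update_of_ne h1]
  have hswap : ∀ y : ι → A, (fun k => y (Equiv.swap i j k)) = swapStrat y i j := by
    intro y; funext k
    unfold swapStrat
    by_cases h2 : k = j
    · rw [h2, Equiv.swap_apply_right, Function.update_self]
    · by_cases h1 : k = i
      · rw [h1, Equiv.swap_apply_left]
        have hij : i ≠ j := fun h => h2 (h1.trans h)
        rw [Function.update_of_ne hij, Function.update_self]
      · rw [Equiv.swap_apply_of_ne_of_ne h1 h2, Function.update_of_ne h2,
          Function.update_of_ne h1]
  unfold U
  set e : (ι → A) ≃ (ι → A) := Equiv.arrowCongr (Equiv.swap i j) (Equiv.refl A) with he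
  rw [← Equiv.sum_comp e (fun y => u y * ∏ k, Q k (y k))]
  refine Finset.sum_congr rfl fun y _ => ?_
  have hey : ∀ k, e y k = y (Equiv.swap i j k) := by
    intro k
    simp [he, Equiv.arrowCongr, Equiv.symm_swap]
  have hprod : ∏ k, Q k (e y k) = ∏ k, P k (y k) := by
    rw [← Equiv.prod_comp (Equiv.swap i j) (fun k => Q k (e y k))]
    refine Finset.prod_congr rfl fun k _ => ?_
    rw [hey, Equiv.swap_apply_self, hQ]
  rw [hprod]
  by_cases hy : ∀ k, y k ∈ Y k
  · have : e y = swapStrat y i j := by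
      funext k; rw [hey k]; rw [← hswap y]
    rw [this, hu y hy]
  · push_neg at hy
    obtain ⟨k, hk⟩ := hy
    have hz : P k (y k) = 0 := (hP k).2.1 _ hk
    have : ∏ k, P k (y k) = 0 := Finset.prod_eq_zero (Finset.mem_univ k) hz
    rw [this, mul_zero, mul_zero]

lemma cluster_congr (cls : ι → κ) {i j : ι} (h : cls i = cls j) :
    cluster cls i = cluster cls j := by
  unfold cluster; rw [h]

lemma centroid_classConst (cls : ι → κ) (p : ι → A → ℝ) {i j : ι} (h : cls i = cls j) :
    centroid cls p i = centroid cls p j := by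
  unfold centroid; rw [cluster_congr cls h]

lemma centroid_mem_simplex (Y : ι → Finset A) (cls : ι → κ)
    (hYc : ∀ i j, cls i = cls j → Y i = Y j)
    (p : ι → A → ℝ) (hp : p ∈ Delta Y) (i : ι) :
    centroid cls p i ∈ simplex (Y i) := by
  classical
  have hii : i ∈ cluster cls i := by simp [cluster]
  have hcpos : (0 : ℝ) < ((cluster cls i).card : ℝ) := by
    exact_mod_cast Finset.card_pos.2 ⟨i, hii⟩
  have hmemY : ∀ j ∈ cluster cls i, Y j = Y i := by
    intro j hj
    have : cls j = cls i := (Finset.mem_filter.1 hj).2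
    exact hYc j i this
  refine ⟨?_, ?_, ?_⟩
  · intro a
    simp only [centroid, Pi.smul_apply, Finset.sum_apply, smul_eq_mul]
    exact mul_nonneg (by positivity) (Finset.sum_nonneg fun j _ => (hp j).1 a)
  · intro a ha
    simp only [centroid, Pi.smul_apply, Finset.sum_apply, smul_eq_mul]
    have : ∑ j ∈ cluster cls i, p j a = 0 :=
      Finset.sum_eq_zero fun j hj => (hp j).2.1 a (by rw [hmemY j hj]; exact ha)
    rw [this, mul_zero]
  · simp only [centroid, Pi.smul_apply, Finset.sum_apply, smul_eq_mul]
    rw [← Finset.mul_sum, Finset.sum_comm]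
    have : ∀ j ∈ cluster cls i, ∑ a ∈ Y i, p j a = 1 := by
      intro j hj
      rw [← hmemY j hj]; exact (hp j).2.2
    rw [Finset.sum_congr rfl this, Finset.sum_const, nsmul_eq_mul, mul_one,
      inv_mul_cancel₀ (ne_of_gt hcpos)]

/-- **Lemma 1.** For a permutation-invariant partition of an identical-interests game and any
`p ∈ Δⁿ`, `(1/n) ∑ᵢ U(pᵢ, p̄_{-i}) = U(p̄)`. -/
theorem average_U_eq_U_centroid
    (Y : ι → Finset A) (hY : ∀ i, (Y i).Nonempty) (u : (ι → A) → ℝ)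
    (cls : ι → κ) (hpi : PermInvariant Y u cls)
    (p : ι → A → ℝ) (hp : p ∈ Delta Y) :
    (Fintype.card ι : ℝ)⁻¹ *
        ∑ i, U u (Function.update (centroid cls p) i (p i))
      = U u (centroid cls p) := by
  classical
  set pb := centroid cls p with hpbdef
  have hYc : ∀ i j, cls i = cls j → Y i = Y j := fun i j h => (hpi i j h).1
  have hpbmem : ∀ k, pb k ∈ simplex (Y k) := centroid_mem_simplex Y cls hYc p hp
  -- key swap equality: same-class players see the same linear form
  have key : ∀ i j, cls i = cls j → ∀ q ∈ simplex (Y i),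
      U u (Function.update pb i q) = U u (Function.update pb j q) := by
    intro i j hij q hq
    rcases eq_or_ne i j with rfl | hne
    · rfl
    · set P := Function.update pb i q with hPdef
      have hPmem : ∀ k, P k ∈ simplex (Y k) := by
        intro k
        rcases eq_or_ne k i with rfl | hk
        · rw [hPdef, Function.update_self]; exact hq
        · rw [hPdef, Function.update_of_ne hk]; exact hpbmem k
      have hswapU := U_swapMixed Y u i j (fun y hy => (hpi i j hij).2 y hy) P hPmem
      have hPj : P j = pb j := by rw [hPdef, Function.update_of_ne (Ne.symm hne)]
      have hPi : P i = q := by rw [hPdef, Function.update_self]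
      have hstep : Function.update (Function.update P i (P j)) j (P i)
          = Function.update pb j q := by
        rw [hPj, hPi, hPdef]
        rw [Function.update_idem]
        have hpbc : pb j = pb i := centroid_classConst cls p hij.symm
        rw [hpbc, Function.update_eq_self]
      rw [hstep] at hswapU
      exact hswapU.symm
  -- same-class clusters coincide, so cluster cards match
  have hcard : ∀ i j, j ∈ cluster cls i → cluster cls j = cluster cls i := by
    intro i j hj
    exact cluster_congr cls (Finset.mem_filter.1 hj).2
  have hself : ∀ i : ι, i ∈ cluster cls i := by intro i; simp [cluster]
  have hcpos : ∀ i : ι, (0 : ℝ) < ((cluster cls i).card : ℝ) := by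
    intro i; exact_mod_cast Finset.card_pos.2 ⟨i, hself i⟩
  -- step 1 : expand each term using the swap equality
  have step1 : ∀ i, U u (Function.update pb i (p i))
      = ((cluster cls i).card : ℝ)⁻¹ *
          ∑ j ∈ cluster cls i, U u (Function.update pb j (p i)) := by
    intro i
    have : ∑ j ∈ cluster cls i, U u (Function.update pb j (p i))
        = ((cluster cls i).card : ℝ) * U u (Function.update pb i (p i)) := by
      rw [Finset.sum_congr rfl (fun j hj =>
        (key i j (Finset.mem_filter.1 hj).2.symm (p i) (hp i)).symm)]
      rw [Finset.sum_const, nsmul_eq_mul]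
    rw [this, ← mul_assoc, inv_mul_cancel₀ (ne_of_gt (hcpos i)), one_mul]
  -- main computation
  have hmain : ∑ i, U u (Function.update pb i (p i))
      = (Fintype.card ι : ℝ) * U u pb := by
    calc ∑ i, U u (Function.update pb i (p i))
        = ∑ i, ∑ j ∈ cluster cls i,
            ((cluster cls i).card : ℝ)⁻¹ * U u (Function.update pb j (p i)) := by
          refine Finset.sum_congr rfl fun i _ => ?_
          rw [step1 i, Finset.mul_sum]
      _ = ∑ i, ∑ j ∈ cluster cls i,
            ((cluster cls j).card : ℝ)⁻¹ * U u (Function.update pb j (p i)) := by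
          refine Finset.sum_congr rfl fun i _ => Finset.sum_congr rfl fun j hj => ?_
          rw [hcard i j hj]
      _ = ∑ j, ∑ i ∈ cluster cls j,
            ((cluster cls j).card : ℝ)⁻¹ * U u (Function.update pb j (p i)) := by
          refine Finset.sum_comm' fun i j => ?_
          simp only [Finset.mem_univ, true_and, and_true, cluster, Finset.mem_filter]
          exact eq_comm
      _ = ∑ j, U u (Function.update pb j
            (((cluster cls j).card : ℝ)⁻¹ • ∑ i ∈ cluster cls j, p i)) := by
          refine Finset.sum_congr rfl fun j _ => ?_
          rw [U_update_smul_sum, Finset.mul_sum]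
      _ = ∑ j : ι, U u pb := by
          refine Finset.sum_congr rfl fun j _ => ?_
          have : (((cluster cls j).card : ℝ)⁻¹ • ∑ i ∈ cluster cls j, p i) = pb j := rfl
          rw [this, Function.update_eq_self]
      _ = (Fintype.card ι : ℝ) * U u pb := by
          rw [Finset.sum_const, Finset.card_univ, nsmul_eq_mul]
  rw [hmain, ← mul_assoc, inv_mul_cancel₀, one_mul]
  exact_mod_cast Fintype.card_ne_zero

end ECFP
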